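/- Let s ≥ 2 and let F be a stable 3-graph with vertex set [n] that has property U(s, 2s+1) and satisfies ν(F) ≥ 2. Then ν(∂F − [4]) ≤ s − 2, where ∂F − [4] denotes the set of edges of the shadow ∂F that are disjoint from {1, 2, 3, 4}. -/

import Mathlib

open Finset

/-- `F₁ ≺ F₂`: same size, and the `i`-th smallest element of `F₁` is at most
the `i`-th smallest element of `F₂`. -/
def PrecS (A B : Finset ℕ) : Prop :=
  A.card = B.card ∧
    ∀ i, i < A.card → (A.sort (· ≤ ·)).getD i 0 ≤ (B.sort (· ≤ ·)).getD i 0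

/-- A family of subsets of `[n] = {1,…,n}` is stable (shifted). -/
def IsStable (n : ℕ) (F : Finset (Finset ℕ)) : Prop :=
  ∀ A B : Finset ℕ, A ⊆ Finset.Icc 1 n → B ∈ F → PrecS A B → A ∈ F

/-- Property `U(s, q)`: any `s` edges (repetitions allowed) have union of size at most `q`. -/
def HasU (F : Finset (Finset ℕ)) (s q : ℕ) : Prop :=
  ∀ f : Fin s → Finset ℕ, (∀ i, f i ∈ F) → (Finset.univ.biUnion f).card ≤ q

/-- Matching number: the maximum size of a set of pairwise disjoint edges of `F`. -/
def matchNum (F : Finset (Finset ℕ)) : ℕ :=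
  (F.powerset.filter fun M => ∀ a ∈ M, ∀ b ∈ M, a ≠ b → Disjoint a b).sup Finset.card

/-- Shadow of a 3-uniform family: all 2-element subsets of its edges. -/
def shadow2 (F : Finset (Finset ℕ)) : Finset (Finset ℕ) :=
  F.biUnion fun f => f.powersetCard 2

/-- Deletion of the first `i` vertices: edges disjoint from `[i] = {1,…,i}`. -/
def del (F : Finset (Finset ℕ)) (i : ℕ) : Finset (Finset ℕ) :=
  F.filter fun e => Disjoint e (Finset.Icc 1 i)


lemma sort_triple {a b c : ℕ} (h1 : a < b) (h2 : b < c) :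
    ({a, b, c} : Finset ℕ).sort (· ≤ ·) = [a, b, c] := by
  have hbc : ({b, c} : Finset ℕ).sort (· ≤ ·) = [b, c] := by
    rw [show ({b,c} : Finset ℕ) = insert b {c} from rfl,
      Finset.sort_insert (· ≤ ·) (by simp; omega) (by simp; omega), Finset.sort_singleton]
  rw [show ({a,b,c} : Finset ℕ) = insert a {b,c} from rfl,
    Finset.sort_insert (· ≤ ·) (by simp; omega) (by simp; omega), hbc]

lemma card_triple {a b c : ℕ} (h1 : a < b) (h2 : b < c) :
    ({a, b, c} : Finset ℕ).card = 3 := by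
  rw [Finset.card_insert_of_notMem (by simp; omega),
    Finset.card_insert_of_notMem (by simp; omega), Finset.card_singleton]

lemma precS_triple {a b c a' b' c' : ℕ} (hab : a < b) (hbc : b < c)
    (hab' : a' < b') (hbc' : b' < c') (ha : a ≤ a') (hb : b ≤ b') (hc : c ≤ c') :
    PrecS {a, b, c} {a', b', c'} := by
  refine ⟨by rw [card_triple hab hbc, card_triple hab' hbc'], ?_⟩
  intro i hi
  rw [card_triple hab hbc] at hi
  rw [sort_triple hab hbc, sort_triple hab' hbc']
  interval_cases i <;> simpa

lemma exists_sorted_of_card_three {s : Finset ℕ} (h : s.card = 3) :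
    ∃ p q r, p < q ∧ q < r ∧ s = {p, q, r} := by
  have hlen : (s.sort (· ≤ ·)).length = 3 := by rw [Finset.length_sort, h]
  have hsrt := (Finset.sortedLT_sort s).pairwise
  match hl : s.sort (· ≤ ·), hlen with
  | [p, q, r], _ =>
    rw [hl] at hsrt
    refine ⟨p, q, r, ?_, ?_, ?_⟩
    · simp [List.pairwise_cons] at hsrt; omega
    · simp [List.pairwise_cons] at hsrt; omega
    · ext a
      rw [← Finset.mem_sort (· ≤ ·), hl]
      simp [Finset.mem_insert]

lemma exists_matching {F : Finset (Finset ℕ)} {k : ℕ} (h : k ≤ matchNum F) :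
    ∃ M, M ⊆ F ∧ (∀ a ∈ M, ∀ b ∈ M, a ≠ b → Disjoint a b) ∧ M.card = k := by
  classical
  unfold matchNum at h
  set S := F.powerset.filter fun M => ∀ a ∈ M, ∀ b ∈ M, a ≠ b → Disjoint a b with hS
  have hne : S.Nonempty := ⟨∅, by simp [hS]⟩
  obtain ⟨M, hM, hMcard⟩ := Finset.exists_mem_eq_sup S hne Finset.card
  rw [hMcard] at h
  obtain ⟨M', hM'sub, hM'card⟩ := Finset.exists_subset_card_eq h
  simp only [hS, Finset.mem_filter, Finset.mem_powerset] at hM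
  exact ⟨M', hM'sub.trans hM.1, fun a ha b hb hab => hM.2 a (hM'sub ha) b (hM'sub hb) hab, hM'card⟩

lemma exists_sorted_of_card_two {s : Finset ℕ} (h : s.card = 2) :
    ∃ a b, a < b ∧ s = {a, b} := by
  obtain ⟨a, b, hne, rfl⟩ := Finset.card_eq_two.mp h
  rcases hne.lt_or_gt with h1 | h1
  · exact ⟨a, b, h1, rfl⟩
  · exact ⟨b, a, h1, Finset.pair_comm a b⟩


/-- Claim 1 of Lemma 3.2: nu(shadow F - [4]) ≤ s - 2. -/
theorem shadow_del_four (n s : ℕ) (hs : 2 ≤ s)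
    (F : Finset (Finset ℕ))
    (hF : ∀ e ∈ F, e ⊆ Finset.Icc 1 n ∧ e.card = 3)
    (hst : IsStable n F)
    (hU : HasU F s (2 * s + 1))
    (hnu : 2 ≤ matchNum F) :
    matchNum (del (shadow2 F) 4) ≤ s - 2 := by
  classical
  by_contra hcon
  push_neg at hcon
  have h1 : s - 1 ≤ matchNum (del (shadow2 F) 4) := by omega
  obtain ⟨M, hMsub, hMdisj, hMcard⟩ := exists_matching h1
  have hMfacts : ∀ e ∈ M, (∃ f ∈ F, e ⊆ f) ∧ e.card = 2 ∧ Disjoint e (Finset.Icc 1 4) := by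
    intro e he
    have := hMsub he
    simp only [del, Finset.mem_filter, shadow2, Finset.mem_biUnion] at this
    obtain ⟨⟨f, hfF, hef⟩, hdis⟩ := this
    rw [Finset.mem_powersetCard] at hef
    exact ⟨⟨f, hfF, hef.1⟩, hef.2, hdis⟩
  -- an edge of F avoiding 1, hence {2,3,4} ∈ F
  obtain ⟨M2, hM2F, hM2d, hM2c⟩ := exists_matching hnu
  obtain ⟨f0, g0, hfg0, hM2⟩ := Finset.card_eq_two.mp hM2c
  have hf0 : f0 ∈ F := hM2F (by simp [hM2])
  have hg0 : g0 ∈ F := hM2F (by simp [hM2])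
  have hdisj0 : Disjoint f0 g0 := hM2d f0 (by simp [hM2]) g0 (by simp [hM2]) hfg0
  have hex : ∃ g ∈ F, 1 ∉ g := by
    by_cases h1f : (1 : ℕ) ∈ f0
    · exact ⟨g0, hg0, fun h => (Finset.disjoint_left.mp hdisj0 h1f) h⟩
    · exact ⟨f0, hf0, h1f⟩
  obtain ⟨g, hgF, h1g⟩ := hex
  obtain ⟨p, q, r, hpq, hqr, hgpqr⟩ := exists_sorted_of_card_three (hF g hgF).2
  have hgsub := (hF g hgF).1
  have hp2 : 2 ≤ p := by
    have hp : p ∈ Finset.Icc 1 n := hgsub (by rw [hgpqr]; simp)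
    have : p ≠ 1 := fun h => h1g (by rw [hgpqr]; simp [h])
    simp only [Finset.mem_Icc] at hp; omega
  have hrn : r ≤ n := by
    have := hgsub (show r ∈ g by rw [hgpqr]; simp)
    simp only [Finset.mem_Icc] at this; omega
  have hn4 : 4 ≤ n := by omega
  have h234 : ({2, 3, 4} : Finset ℕ) ∈ F := by
    refine hst _ g ?_ hgF ?_
    · intro x hx; simp only [Finset.mem_insert, Finset.mem_singleton] at hx
      simp only [Finset.mem_Icc]; omega
    · rw [hgpqr]
      exact precS_triple (by omega) (by omega) hpq hqr (by omega) (by omega) (by omega)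
  -- each matching edge extended by 1 is in F
  have hins : ∀ e ∈ M, insert 1 e ∈ F := by
    intro e he
    obtain ⟨⟨f, hfF, hef⟩, hc2, hdis⟩ := hMfacts e he
    obtain ⟨a, b, hab, rfl⟩ := exists_sorted_of_card_two hc2
    have ha5 : 5 ≤ a := by
      have h1 : a ∈ Finset.Icc 1 n := (hF f hfF).1 (hef (by simp))
      have h2 : a ∉ Finset.Icc 1 4 := Finset.disjoint_left.mp hdis (by simp)
      simp only [Finset.mem_Icc] at h1 h2; omega
    obtain ⟨x, y, z, hxy, hyz, hfxyz⟩ := exists_sorted_of_card_three (hF f hfF).2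
    have hax : a ∈ ({x, y, z} : Finset ℕ) := by rw [← hfxyz]; exact hef (by simp)
    have hbx : b ∈ ({x, y, z} : Finset ℕ) := by rw [← hfxyz]; exact hef (by simp)
    simp only [Finset.mem_insert, Finset.mem_singleton] at hax hbx
    have hx1 : 1 ≤ x := by
      have := (hF f hfF).1 (show x ∈ f by rw [hfxyz]; simp)
      simp only [Finset.mem_Icc] at this; omega
    have hbz : b ≤ z := by omega
    have hay : a ≤ y := by omega
    refine hst _ f ?_ hfF ?_
    · intro w hw
      simp only [Finset.mem_insert, Finset.mem_singleton] at hw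
      rcases hw with rfl | rfl | rfl
      · simp only [Finset.mem_Icc]; omega
      · exact (hF f hfF).1 (hef (by simp))
      · exact (hF f hfF).1 (hef (by simp))
    · rw [hfxyz]
      exact precS_triple (by omega) hab hxy hyz hx1 hay hbz
  -- assemble the s edges
  set G := insert ({2, 3, 4} : Finset ℕ) (M.image (insert 1)) with hG
  have h1notin : ∀ e ∈ M, (1 : ℕ) ∉ e := by
    intro e he h
    exact Finset.disjoint_left.mp (hMfacts e he).2.2 h (by simp)
  have hGF : G ⊆ F := by
    intro t ht
    rw [hG, Finset.mem_insert] at ht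
    rcases ht with rfl | ht
    · exact h234
    · obtain ⟨e, he, rfl⟩ := Finset.mem_image.mp ht
      exact hins e he
  have hinj : Set.InjOn (insert 1) (M : Set (Finset ℕ)) := by
    intro e he e' he' hee
    have := congrArg (fun t => Finset.erase t 1) hee
    simpa [Finset.erase_insert (h1notin e he), Finset.erase_insert (h1notin e' he')] using this
  have h234notin : ({2, 3, 4} : Finset ℕ) ∉ M.image (insert 1) := by
    intro h
    obtain ⟨e, he, heq⟩ := Finset.mem_image.mp h
    have h2 : (2 : ℕ) ∈ insert 1 e := by rw [heq]; simp
    rcases Finset.mem_insert.mp h2 with h | h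
    · omega
    · exact Finset.disjoint_left.mp (hMfacts e he).2.2 h (by simp)
  have hGcard : G.card = s := by
    rw [hG, Finset.card_insert_of_notMem h234notin, Finset.card_image_of_injOn hinj, hMcard]
    omega
  have hMne : M.Nonempty := Finset.card_pos.mp (by omega)
  -- the union
  have hGU : G.biUnion id = Finset.Icc 1 4 ∪ M.biUnion id := by
    ext x
    simp only [Finset.mem_biUnion, hG, Finset.mem_insert, Finset.mem_image, Finset.mem_union,
      id_eq]
    constructor
    · rintro ⟨t, rfl | ⟨e, he, rfl⟩, hx⟩
      · simp only [Finset.mem_insert, Finset.mem_singleton] at hx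
        left; simp only [Finset.mem_Icc]; omega
      · rcases Finset.mem_insert.mp hx with rfl | hx
        · left; simp
        · exact Or.inr ⟨e, he, hx⟩
    · rintro (hx | ⟨e, he, hx⟩)
      · simp only [Finset.mem_Icc] at hx
        obtain ⟨hx1, hx2⟩ := hx
        interval_cases x
        · obtain ⟨e, he⟩ := hMne
          exact ⟨insert 1 e, Or.inr ⟨e, he, rfl⟩, by simp⟩
        · exact ⟨{2, 3, 4}, Or.inl rfl, by simp⟩
        · exact ⟨{2, 3, 4}, Or.inl rfl, by simp⟩
        · exact ⟨{2, 3, 4}, Or.inl rfl, by simp⟩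
      · exact ⟨insert 1 e, Or.inr ⟨e, he, rfl⟩, Finset.mem_insert_of_mem hx⟩
  have hMU : (M.biUnion id).card = 2 * (s - 1) := by
    rw [show M.biUnion id = M.biUnion (fun e => e) from rfl,
      Finset.card_biUnion (fun e he e' he' h => hMdisj e he e' he' h)]
    rw [Finset.sum_congr rfl (fun e he => (hMfacts e he).2.1), Finset.sum_const, hMcard,
      smul_eq_mul]
    omega
  have hdisjU : Disjoint (Finset.Icc 1 4) (M.biUnion id) := by
    rw [Finset.disjoint_right]
    intro x hx
    obtain ⟨e, he, hxe⟩ := Finset.mem_biUnion.mp hx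
    exact fun h => Finset.disjoint_left.mp (hMfacts e he).2.2 hxe h
  have hcardU : (G.biUnion id).card = 2 * s + 2 := by
    rw [hGU, Finset.card_union_of_disjoint hdisjU, hMU, Nat.card_Icc]
    omega
  -- apply HasU
  set φ : Fin s → Finset ℕ := fun i => (G.equivFin.symm (Fin.cast hGcard.symm i) : Finset ℕ)
    with hφ
  have hφF : ∀ i, φ i ∈ F := fun i => hGF (G.equivFin.symm (Fin.cast hGcard.symm i)).2
  have hφU : Finset.univ.biUnion φ = G.biUnion id := by
    ext x
    simp only [Finset.mem_biUnion, Finset.mem_univ, true_and, id_eq]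
    constructor
    · rintro ⟨i, hx⟩
      exact ⟨_, (G.equivFin.symm (Fin.cast hGcard.symm i)).2, hx⟩
    · rintro ⟨t, ht, hx⟩
      refine ⟨Fin.cast hGcard (G.equivFin ⟨t, ht⟩), ?_⟩
      have : Fin.cast hGcard.symm (Fin.cast hGcard (G.equivFin ⟨t, ht⟩)) = G.equivFin ⟨t, ht⟩ := by
        ext; simp
      rw [hφ]; simp only [this, Equiv.symm_apply_apply]; exact hx
  have := hU φ hφF
  rw [hφU, hcardU] at this
  omega
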